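/- The large rank of the multiplicative semigroup A^+(B_2) equals 28; equivalently, {(1,2;id), (1,2;(1 2))} is a prime subset of A^+(B_2) of minimum cardinality, and |A^+(B_2)| = 29. -/

import Mathlib

def Bn (n : ℕ) : Type := Option (Fin n × Fin n)

def Bn.mul {n : ℕ} : Bn n → Bn n → Bn n
  | some (i, j), some (k, l) => if j = k then some (i, l) else none
  | _, _ => none

instance (n : ℕ) : Mul (Bn n) := ⟨Bn.mul⟩

instance (n : ℕ) : Semigroup (Bn n) where
  mul_assoc a b c := by
    show Bn.mul (Bn.mul a b) c = Bn.mul a (Bn.mul b c)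
    have e : ∀ i j k l : Fin n, Bn.mul (some (i, j)) (some (k, l)) =
        if j = k then some (i, l) else none := fun _ _ _ _ => rfl
    rcases a with _ | ⟨i, j⟩ <;> rcases b with _ | ⟨k, l⟩ <;> rcases c with _ | ⟨p, q⟩ <;>
      (try rfl) <;> simp only [e] <;> split_ifs <;> first | rfl | (simp_all <;> rfl)

/-- Maps on `Bn n`, composed left-to-right: `x (f * g) = (x f) g`. -/
def MapBn (n : ℕ) : Type := Bn n → Bn n

instance (n : ℕ) : Monoid (MapBn n) where
  mul f g := fun x => g (f x)
  one := fun x => x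
  mul_assoc _ _ _ := rfl
  one_mul _ := rfl
  mul_one _ := rfl

/-- The constant map `ξ_c`. -/
def constMap (n : ℕ) (c : Bn n) : MapBn n := fun _ => c

/-- The `n`-support map `(p, q; σ)`, sending `(i, p) ↦ (iσ, q)` and all else to `θ`. -/
def nSuppMap (n : ℕ) (p q : Fin n) (σ : Equiv.Perm (Fin n)) : MapBn n :=
  fun x =>
    match x with
    | some (i, j) => if j = p then some (σ i, q) else none
    | none => none

instance (n : ℕ) : DecidableEq (Bn n) :=
  inferInstanceAs (DecidableEq (Option (Fin n × Fin n)))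

/-- The singleton-support map `((k,l) → (p,q))`. -/
def sglMap (n : ℕ) (k l p q : Fin n) : MapBn n :=
  fun x => @ite _ (x = some (k, l)) (instDecidableEqBn n x (some (k, l))) (some (p, q)) none

/-- The multiplicative semigroup reduct `A⁺(Bₙ)`, as a set of maps on `Bn n`. -/
def APlus (n : ℕ) : Set (MapBn n) :=
  {f | (∃ c, f = constMap n c) ∨ (∃ p q σ, f = nSuppMap n p q σ) ∨
       (∃ k l p q, f = sglMap n k l p q)}

/-- Independence of a subset of a semigroup. -/
def IndependentIn {S : Type*} [Semigroup S] (U : Set S) : Prop :=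
  ∀ a ∈ U, a ∉ Subsemigroup.closure (U \ {a})


instance (n : ℕ) : Fintype (Bn n) := inferInstanceAs (Fintype (Option (Fin n × Fin n)))
instance (n : ℕ) : DecidableEq (MapBn n) := inferInstanceAs (DecidableEq (Bn n → Bn n))

def Tfin : Finset (MapBn 2) :=
  (Finset.univ.image (constMap 2)) ∪
  (Finset.univ.image (fun x : Fin 2 × Fin 2 × Equiv.Perm (Fin 2) => nSuppMap 2 x.1 x.2.1 x.2.2)) ∪
  (Finset.univ.image (fun x : (Fin 2 × Fin 2) × (Fin 2 × Fin 2) => sglMap 2 x.1.1 x.1.2 x.2.1 x.2.2))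

def Vfin : Finset (MapBn 2) := {nSuppMap 2 0 1 1, nSuppMap 2 0 1 (Equiv.swap 0 1)}

lemma coeT : (Tfin : Set (MapBn 2)) = APlus 2 := by
  ext f
  simp only [Tfin, APlus, Finset.coe_union, Set.mem_union, Finset.mem_coe,
    Finset.mem_image, Finset.mem_univ, true_and, Set.mem_setOf_eq]
  constructor
  · rintro ((⟨c, rfl⟩ | ⟨⟨p, q, σ⟩, rfl⟩) | ⟨⟨⟨k, l⟩, p, q⟩, rfl⟩)
    · exact Or.inl ⟨c, rfl⟩
    · exact Or.inr (Or.inl ⟨p, q, σ, rfl⟩)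
    · exact Or.inr (Or.inr ⟨k, l, p, q, rfl⟩)
  · rintro (⟨c, rfl⟩ | ⟨p, q, σ, rfl⟩ | ⟨k, l, p, q, rfl⟩)
    · exact Or.inl (Or.inl ⟨c, rfl⟩)
    · exact Or.inl (Or.inr ⟨⟨p, q, σ⟩, rfl⟩)
    · exact Or.inr ⟨⟨⟨k, l⟩, ⟨p, q⟩⟩, rfl⟩

lemma Tcard : Tfin.card = 29 := by decide

lemma Tmul : ∀ a ∈ Tfin, ∀ b ∈ Tfin, a * b ∈ Tfin := by decide

lemma Tprod : ∀ w ∈ Tfin, ∃ a ∈ Tfin, ∃ b ∈ Tfin, a * b = w ∧ a ≠ w ∧ b ≠ w := by decide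

lemma Vprime : ∀ a ∈ Tfin, ∀ b ∈ Tfin, a * b ∈ Vfin → a ∈ Vfin ∨ b ∈ Vfin := by decide

lemma VsubT : Vfin ⊆ Tfin := by decide

lemma Vcard : Vfin.card = 2 := by decide

lemma TVcard : (Tfin \ Vfin).card = 27 := by decide

lemma wnotin : nSuppMap 2 0 1 1 ∉ Tfin \ Vfin := by decide

lemma winT : nSuppMap 2 0 1 1 ∈ Tfin := by decide

/-- `APlus 2` as a subsemigroup. -/
def Ssub : Subsemigroup (MapBn 2) where
  carrier := ↑Tfin
  mul_mem' := fun ha hb => Tmul _ ha _ hb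

/-- The complement of `V` as a subsemigroup. -/
def S27 : Subsemigroup (MapBn 2) where
  carrier := ↑(Tfin \ Vfin)
  mul_mem' := by
    intro a b ha hb
    simp only [Finset.coe_sdiff, Set.mem_diff, Finset.mem_coe] at ha hb ⊢
    refine ⟨Tmul _ ha.1 _ hb.1, fun hV => ?_⟩
    rcases Vprime _ ha.1 _ hb.1 hV with h | h
    · exact ha.2 h
    · exact hb.2 h

lemma closure_del (w : MapBn 2) (hw : w ∈ Tfin) :
    (Subsemigroup.closure ((Tfin : Set (MapBn 2)) \ {w}) : Set (MapBn 2)) = ↑Tfin := by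
  apply le_antisymm
  · have : Subsemigroup.closure ((Tfin : Set (MapBn 2)) \ {w}) ≤ Ssub :=
      Subsemigroup.closure_le.mpr (fun x hx => hx.1)
    exact this
  · intro x hx
    by_cases hxw : x = w
    · subst hxw
      obtain ⟨a, ha, b, hb, hab, haw, hbw⟩ := Tprod x hx
      have haC : a ∈ Subsemigroup.closure ((Tfin : Set (MapBn 2)) \ {x}) :=
        Subsemigroup.subset_closure ⟨ha, haw⟩
      have hbC : b ∈ Subsemigroup.closure ((Tfin : Set (MapBn 2)) \ {x}) :=
        Subsemigroup.subset_closure ⟨hb, hbw⟩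
      have hm := Subsemigroup.mul_mem _ haC hbC
      rwa [hab] at hm
    · exact Subsemigroup.subset_closure ⟨hx, hxw⟩

theorem large_rank_APlus_two :
    let V : Set (MapBn 2) := {nSuppMap 2 0 1 1, nSuppMap 2 0 1 (Equiv.swap 0 1)}
    sInf {k | ∀ U : Set (MapBn 2), U ⊆ APlus 2 → U.ncard = k →
        (Subsemigroup.closure U : Set (MapBn 2)) = APlus 2} = 28 ∧
    (V ⊆ APlus 2 ∧ V.Nonempty ∧
      (∀ a ∈ APlus 2, ∀ b ∈ APlus 2, a * b ∈ V → a ∈ V ∨ b ∈ V) ∧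
      ∀ W ⊆ APlus 2, W.Nonempty →
        (∀ a ∈ APlus 2, ∀ b ∈ APlus 2, a * b ∈ W → a ∈ W ∨ b ∈ W) →
        V.ncard ≤ W.ncard) ∧
    (APlus 2).ncard = 29 := by
  intro V
  have hVcoe : V = (Vfin : Set (MapBn 2)) := by
    ext x; simp [Vfin, V]
  have hTAP : (Tfin : Set (MapBn 2)) = APlus 2 := coeT
  have hAPcard : (APlus 2).ncard = 29 := by
    rw [← hTAP, Set.ncard_coe_finset, Tcard]
  have hTfinite : (Tfin : Set (MapBn 2)).Finite := (Tfin : Set (MapBn 2)).toFinite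
  -- membership in 28 : the target set
  have h28 : ∀ U : Set (MapBn 2), U ⊆ APlus 2 → U.ncard = 28 →
      (Subsemigroup.closure U : Set (MapBn 2)) = APlus 2 := by
    intro U hU hUc
    rw [← hTAP] at hU ⊢
    have hdiff : ((Tfin : Set (MapBn 2)) \ U).ncard = 1 := by
      rw [Set.ncard_diff hU (hTfinite.subset hU), Set.ncard_coe_finset, Tcard, hUc]
    obtain ⟨w, hw⟩ := Set.ncard_eq_one.mp hdiff
    have hwT : w ∈ Tfin := by
      have : w ∈ (Tfin : Set (MapBn 2)) \ U := hw ▸ rfl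
      exact this.1
    have hwU : w ∉ U := by
      have : w ∈ (Tfin : Set (MapBn 2)) \ U := hw ▸ rfl
      exact this.2
    have hUeq : U = (Tfin : Set (MapBn 2)) \ {w} := by
      ext x
      constructor
      · intro hx
        refine ⟨hU hx, fun hxw => ?_⟩
        simp only [Set.mem_singleton_iff] at hxw
        exact hwU (hxw ▸ hx)
      · rintro ⟨hxT, hxw⟩
        by_contra hxU
        have : x ∈ (Tfin : Set (MapBn 2)) \ U := ⟨hxT, hxU⟩
        rw [hw] at this
        exact hxw this
    rw [hUeq]
    exact closure_del w hwT
  refine ⟨?_, ⟨?_, ?_, ?_, ?_⟩, hAPcard⟩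
  · -- sInf = 28
    apply le_antisymm
    · exact Nat.sInf_le h28
    · refine le_csInf ⟨28, h28⟩ ?_
      intro k hk
      by_contra hlt
      push_neg at hlt
      have hk27 : k ≤ 27 := by omega
      have hcard27 : ((Tfin \ Vfin : Finset (MapBn 2)) : Set (MapBn 2)).ncard = 27 := by
        rw [Set.ncard_coe_finset, TVcard]
      obtain ⟨U, hUsub, hUc⟩ := Set.exists_subset_card_eq (hcard27 ▸ hk27 :
        k ≤ ((Tfin \ Vfin : Finset (MapBn 2)) : Set (MapBn 2)).ncard)
      have hUAP : U ⊆ APlus 2 := by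
        intro x hx
        have := hUsub hx
        rw [← hTAP]
        simp only [Finset.coe_sdiff, Set.mem_diff, Finset.mem_coe] at this
        exact this.1
      have hclo := hk U hUAP hUc
      have hle : Subsemigroup.closure U ≤ S27 := Subsemigroup.closure_le.mpr hUsub
      have hmem : nSuppMap 2 0 1 1 ∈ (Subsemigroup.closure U : Set (MapBn 2)) := by
        rw [hclo, ← hTAP]
        exact winT
      exact wnotin (hle hmem)
  · -- V ⊆ APlus 2
    rw [hVcoe, ← hTAP]
    exact fun x hx => VsubT hx
  · exact ⟨nSuppMap 2 0 1 1, Or.inl rfl⟩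
  · -- primality
    intro a ha b hb hab
    rw [← hTAP] at ha hb
    rw [hVcoe] at hab ⊢
    exact Vprime a ha b hb hab
  · -- minimality
    intro W hW hWne hWprime
    have hVc : V.ncard = 2 := by rw [hVcoe, Set.ncard_coe_finset, Vcard]
    rw [hVc]
    by_contra hlt
    push_neg at hlt
    have hWfin : W.Finite := hTfinite.subset (hTAP ▸ hW)
    have hpos : 0 < W.ncard := (Set.ncard_pos hWfin).mpr hWne
    have hW1 : W.ncard = 1 := by omega
    obtain ⟨w, hw⟩ := Set.ncard_eq_one.mp hW1
    have hwT : w ∈ Tfin := by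
      have : w ∈ APlus 2 := hW (hw ▸ rfl)
      rw [← hTAP] at this; exact this
    obtain ⟨a, ha, b, hb, hab, haw, hbw⟩ := Tprod w hwT
    have haAP : a ∈ APlus 2 := hTAP ▸ ha
    have hbAP : b ∈ APlus 2 := hTAP ▸ hb
    have habW : a * b ∈ W := by rw [hw, hab]; rfl
    rcases hWprime a haAP b hbAP habW with h | h
    · rw [hw] at h; exact haw h
    · rw [hw] at h; exact hbw h
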